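/- Let H be a complex Hilbert space and A, B ∈ B(H) with 0 < b₁I ≤ A ≤ a₁I and 0 < b₂I ≤ B ≤ a₂I. Then for every unit vector x ∈ H: ⟨Ax, x⟩⟨Bx, x⟩ − ⟨(A # B)x, x⟩² ≤ ((√(a₁a₂) − √(b₁b₂))/2)² · min{a₁b₁⁻¹, a₂b₂⁻¹}. -/

import Mathlib

open scoped InnerProductSpace

noncomputable section

/-- The real power `A ^ r` of a (positive) operator, via the continuous functional calculus. -/
noncomputable def opPow {H : Type} [NormedAddCommGroup H] [InnerProductSpace ℂ H]
    [CompleteSpace H] (A : H →L[ℂ] H) (r : ℝ) : H →L[ℂ] H :=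
  cfc (fun t : ℝ => t ^ r) A

/-- The operator mean `A σ B = A^{1/2} f(A^{-1/2} B A^{-1/2}) A^{1/2}` associated with the
representing function `f`. -/
noncomputable def opMean {H : Type} [NormedAddCommGroup H] [InnerProductSpace ℂ H]
    [CompleteSpace H] (f : ℝ → ℝ) (A B : H →L[ℂ] H) : H →L[ℂ] H :=
  opPow A (1/2) * cfc f (opPow A (-(1/2)) * B * opPow A (-(1/2))) * opPow A (1/2)

/-- The weighted geometric mean `A #_α B = A^{1/2} (A^{-1/2} B A^{-1/2})^α A^{1/2}`. -/
noncomputable def geoMean {H : Type} [NormedAddCommGroup H] [InnerProductSpace ℂ H]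
    [CompleteSpace H] (α : ℝ) (A B : H →L[ℂ] H) : H →L[ℂ] H :=
  opMean (fun t : ℝ => t ^ α) A B

/-- `f : (0,∞) → (0,∞)` is operator monotone: for all positive invertible operators `X ≤ Y`
(on any complex Hilbert space), `f(X) ≤ f(Y)` in the Loewner order. -/
def IsOperatorMonotone (f : ℝ → ℝ) : Prop :=
  ∀ (H : Type) [NormedAddCommGroup H] [InnerProductSpace ℂ H] [CompleteSpace H]
    (X Y : H →L[ℂ] H), 0 ≤ X → IsUnit X → 0 ≤ Y → IsUnit Y → X ≤ Y →
      cfc f X ≤ cfc f Y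

set_option maxHeartbeats 1000000
set_option synthInstance.maxHeartbeats 400000

namespace OzekiAux

lemma mmul {M : Type*} [Monoid M] {u v c : M} (h : u * v = c) (w : M) :
    u * (v * w) = c * w := by rw [← mul_assoc, h]

variable {H : Type} [NormedAddCommGroup H] [InnerProductSpace ℂ H] [CompleteSpace H]

lemma le_smul_one_iff_spec {A : H →L[ℂ] H} (hA : IsSelfAdjoint A) {r : ℝ} :
    A ≤ r • (1 : H →L[ℂ] H) ↔ ∀ t ∈ spectrum ℝ A, t ≤ r := by
  rw [← Algebra.algebraMap_eq_smul_one (A := H →L[ℂ] H)]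
  exact le_algebraMap_iff_spectrum_le (ha := hA)

lemma smul_one_le_iff_spec {A : H →L[ℂ] H} (hA : IsSelfAdjoint A) {r : ℝ} :
    r • (1 : H →L[ℂ] H) ≤ A ↔ ∀ t ∈ spectrum ℝ A, r ≤ t := by
  rw [← Algebra.algebraMap_eq_smul_one (A := H →L[ℂ] H)]
  exact algebraMap_le_iff_le_spectrum (ha := hA)

variable {A : H →L[ℂ] H} {a b : ℝ}

lemma nonneg_of_lb (hb : 0 < b) (h1 : b • (1 : H →L[ℂ] H) ≤ A) : (0 : H →L[ℂ] H) ≤ A :=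
  le_trans (smul_nonneg hb.le zero_le_one) h1

lemma sa_of_lb (hb : 0 < b) (h1 : b • (1 : H →L[ℂ] H) ≤ A) : IsSelfAdjoint A :=
  .of_nonneg (nonneg_of_lb hb h1)

lemma spec_subset (hA : IsSelfAdjoint A) (h1 : b • (1 : H →L[ℂ] H) ≤ A)
    (h2 : A ≤ a • (1 : H →L[ℂ] H)) : spectrum ℝ A ⊆ Set.Icc b a := fun t ht =>
  ⟨(smul_one_le_iff_spec hA).mp h1 t ht, (le_smul_one_iff_spec hA).mp h2 t ht⟩

lemma contOn_invsqrt (hb : 0 < b) {s : Set ℝ} (hs : s ⊆ Set.Icc b a) :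
    ContinuousOn (fun t : ℝ => (Real.sqrt t)⁻¹) s :=
  Real.continuous_sqrt.continuousOn.inv₀ fun t ht =>
    ne_of_gt (Real.sqrt_pos.mpr (hb.trans_le (hs ht).1))

lemma sqrt_mul_self_cfc (hA : IsSelfAdjoint A) (hb : 0 < b) (hs : spectrum ℝ A ⊆ Set.Icc b a) :
    cfc Real.sqrt A * cfc Real.sqrt A = A := by
  rw [← cfc_mul _ _ A]
  conv_rhs => rw [← cfc_id ℝ A hA]
  exact cfc_congr fun t ht => Real.mul_self_sqrt (hb.le.trans (hs ht).1)

lemma sqrt_mul_invsqrt_cfc (hA : IsSelfAdjoint A) (hb : 0 < b) (hs : spectrum ℝ A ⊆ Set.Icc b a) :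
    cfc Real.sqrt A * cfc (fun t : ℝ => (Real.sqrt t)⁻¹) A = 1 := by
  rw [← cfc_mul _ _ A Real.continuous_sqrt.continuousOn (contOn_invsqrt hb hs)]
  rw [show (1 : H →L[ℂ] H) = cfc (fun _ : ℝ => (1:ℝ)) A by simp [cfc_const (1:ℝ) A hA]]
  exact cfc_congr fun t ht => by
    have : Real.sqrt t ≠ 0 := ne_of_gt (Real.sqrt_pos.mpr (hb.trans_le (hs ht).1))
    field_simp

lemma invsqrt_mul_sqrt_cfc (hA : IsSelfAdjoint A) (hb : 0 < b) (hs : spectrum ℝ A ⊆ Set.Icc b a) :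
    cfc (fun t : ℝ => (Real.sqrt t)⁻¹) A * cfc Real.sqrt A = 1 := by
  rw [← cfc_mul _ _ A (contOn_invsqrt hb hs) Real.continuous_sqrt.continuousOn]
  rw [show (1 : H →L[ℂ] H) = cfc (fun _ : ℝ => (1:ℝ)) A by simp [cfc_const (1:ℝ) A hA]]
  exact cfc_congr fun t ht => by
    have : Real.sqrt t ≠ 0 := ne_of_gt (Real.sqrt_pos.mpr (hb.trans_le (hs ht).1))
    field_simp

lemma opPow_half (hA : IsSelfAdjoint A) : opPow A (1/2) = cfc Real.sqrt A := by
  unfold opPow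
  exact cfc_congr fun t _ => (Real.sqrt_eq_rpow t).symm

lemma opPow_neg_half (hb : 0 < b) (hs : spectrum ℝ A ⊆ Set.Icc b a) :
    opPow A (-(1/2)) = cfc (fun t : ℝ => (Real.sqrt t)⁻¹) A := by
  unfold opPow
  exact cfc_congr fun t ht => by
    rw [Real.rpow_neg (hb.le.trans (hs ht).1), Real.sqrt_eq_rpow]

lemma spec_sqrt (hA : IsSelfAdjoint A) (hs : spectrum ℝ A ⊆ Set.Icc b a) :
    spectrum ℝ (cfc Real.sqrt A) ⊆ Set.Icc (Real.sqrt b) (Real.sqrt a) := by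
  rw [cfc_map_spectrum (ha := hA) Real.sqrt A]
  rintro - ⟨t, ht, rfl⟩
  exact ⟨Real.sqrt_le_sqrt (hs ht).1, Real.sqrt_le_sqrt (hs ht).2⟩

/-- Selfadjointness and spectrum bounds for `A^{-1/2} B A^{-1/2}`. -/
lemma conj_sa {B : H →L[ℂ] H} (hA : IsSelfAdjoint A) (hB : IsSelfAdjoint B) :
    IsSelfAdjoint (cfc (fun t : ℝ => (Real.sqrt t)⁻¹) A * B *
      cfc (fun t : ℝ => (Real.sqrt t)⁻¹) A) := by
  have h1 : IsSelfAdjoint (cfc (fun t : ℝ => (Real.sqrt t)⁻¹) A) := cfc_predicate _ A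
  rw [IsSelfAdjoint] at *
  simp only [star_mul, h1, hB, mul_assoc]

lemma conj_bounds {B : H →L[ℂ] H} {a₁ b₁ a₂ b₂ : ℝ}
    (hb₁ : 0 < b₁) (hb₂ : 0 < b₂) (ha₁ : 0 < a₁) (ha₂ : 0 ≤ a₂)
    (hA : IsSelfAdjoint A)
    (hsA : spectrum ℝ A ⊆ Set.Icc b₁ a₁)
    (hB₁ : b₂ • (1 : H →L[ℂ] H) ≤ B) (hB₂ : B ≤ a₂ • (1 : H →L[ℂ] H)) :
    (b₂ * a₁⁻¹) • (1 : H →L[ℂ] H) ≤ cfc (fun t : ℝ => (Real.sqrt t)⁻¹) A * B *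
        cfc (fun t : ℝ => (Real.sqrt t)⁻¹) A ∧
      cfc (fun t : ℝ => (Real.sqrt t)⁻¹) A * B * cfc (fun t : ℝ => (Real.sqrt t)⁻¹) A ≤
        (a₂ * b₁⁻¹) • (1 : H →L[ℂ] H) := by
  set isa := cfc (fun t : ℝ => (Real.sqrt t)⁻¹) A with hisa
  have hisaSA : IsSelfAdjoint isa := cfc_predicate _ A
  have hconj1 : isa * (b₂ • (1 : H →L[ℂ] H)) * isa ≤ isa * B * isa := by
    have := star_left_conjugate_le_conjugate hB₁ isa
    rwa [hisaSA.star_eq] at this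
  have hconj2 : isa * B * isa ≤ isa * (a₂ • (1 : H →L[ℂ] H)) * isa := by
    have := star_left_conjugate_le_conjugate hB₂ isa
    rwa [hisaSA.star_eq] at this
  have hsmul : ∀ r : ℝ, isa * (r • (1 : H →L[ℂ] H)) * isa =
      cfc (fun t : ℝ => r * ((Real.sqrt t)⁻¹ * (Real.sqrt t)⁻¹)) A := by
    intro r
    have h1 : isa * (r • (1 : H →L[ℂ] H)) * isa = r • (isa * isa) := by
      simp [mul_smul_comm, smul_mul_assoc]
    have h2 : isa * isa = cfc (fun t : ℝ => (Real.sqrt t)⁻¹ * (Real.sqrt t)⁻¹) A := by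
      rw [← cfc_mul _ _ A (contOn_invsqrt hb₁ hsA) (contOn_invsqrt hb₁ hsA)]
    rw [h1, h2, cfc_const_mul r (fun t : ℝ => (Real.sqrt t)⁻¹ * (Real.sqrt t)⁻¹) A ((contOn_invsqrt hb₁ hsA).mul (contOn_invsqrt hb₁ hsA))]
  have hsqne : ∀ t ∈ spectrum ℝ A, (Real.sqrt t)⁻¹ * (Real.sqrt t)⁻¹ = t⁻¹ := by
    intro t ht
    rw [← mul_inv, Real.mul_self_sqrt (hb₁.le.trans (hsA ht).1)]
  constructor
  · refine le_trans ?_ hconj1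
    rw [hsmul b₂, ← Algebra.algebraMap_eq_smul_one (A := H →L[ℂ] H)]
    rw [algebraMap_le_cfc_iff (fun t : ℝ => b₂ * ((Real.sqrt t)⁻¹ * (Real.sqrt t)⁻¹)) _ A
      ((continuousOn_const).mul ((contOn_invsqrt hb₁ hsA).mul (contOn_invsqrt hb₁ hsA)))]
    intro t ht
    rw [hsqne t ht]
    have h1 : 0 < t := hb₁.trans_le (hsA ht).1
    have h2 : t ≤ a₁ := (hsA ht).2
    have : a₁⁻¹ ≤ t⁻¹ := by
      apply inv_anti₀ h1 h2
    exact mul_le_mul_of_nonneg_left this hb₂.le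
  · refine le_trans hconj2 ?_
    rw [hsmul a₂, ← Algebra.algebraMap_eq_smul_one (A := H →L[ℂ] H)]
    rw [cfc_le_algebraMap_iff (fun t : ℝ => a₂ * ((Real.sqrt t)⁻¹ * (Real.sqrt t)⁻¹)) _ A
      ((continuousOn_const).mul ((contOn_invsqrt hb₁ hsA).mul (contOn_invsqrt hb₁ hsA)))]
    intro t ht
    rw [hsqne t ht]
    have h1 : 0 < b₁ := hb₁
    have h2 : b₁ ≤ t := (hsA ht).1
    have h3 : t⁻¹ ≤ b₁⁻¹ := by
      apply inv_anti₀ h1 h2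
    exact mul_le_mul_of_nonneg_left h3 ha₂


lemma re_inner_smul (r : ℝ) (u v : H) : (⟪r • u, v⟫_ℂ).re = r * (⟪u, v⟫_ℂ).re := by
  rw [show r • u = (r : ℂ) • u from RCLike.real_smul_eq_coe_smul r u, inner_smul_left]
  simp

lemma inner_conj_sa {S T : H →L[ℂ] H} (hS : IsSelfAdjoint S) (x : H) :
    ⟪(S * T * S) x, x⟫_ℂ = ⟪T (S x), S x⟫_ℂ := by
  have hmove : ∀ u v : H, ⟪S u, v⟫_ℂ = ⟪u, S v⟫_ℂ := fun u v => by
    nth_rewrite 2 [← hS.adjoint_eq]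
    rw [ContinuousLinearMap.adjoint_inner_right]
  calc ⟪(S * T * S) x, x⟫_ℂ = ⟪S (T (S x)), x⟫_ℂ := by
        simp [ContinuousLinearMap.mul_apply]
  _ = ⟪T (S x), S x⟫_ℂ := hmove _ _

lemma inner_mul_self_sa {S : H →L[ℂ] H} (hS : IsSelfAdjoint S) (x : H) :
    ⟪(S * S) x, x⟫_ℂ = ⟪S x, S x⟫_ℂ := by
  have hmove : ∀ u v : H, ⟪S u, v⟫_ℂ = ⟪u, S v⟫_ℂ := fun u v => by
    nth_rewrite 2 [← hS.adjoint_eq]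
    rw [ContinuousLinearMap.adjoint_inner_right]
  calc ⟪(S * S) x, x⟫_ℂ = ⟪S (S x), x⟫_ℂ := by simp [ContinuousLinearMap.mul_apply]
  _ = ⟪S x, S x⟫_ℂ := hmove _ _

lemma re_inner_le {S T : H →L[ℂ] H} (h : S ≤ T) (x : H) :
    (⟪S x, x⟫_ℂ).re ≤ (⟪T x, x⟫_ℂ).re := by
  have h1 := (ContinuousLinearMap.nonneg_iff_isPositive _).mp (sub_nonneg.mpr h)
  have h2 := h1.inner_nonneg_left x
  simp only [ContinuousLinearMap.sub_apply, inner_sub_left, map_sub, RCLike.re_to_complex] at h2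
  have h3 := (Complex.le_def.mp h2).1
  simp only [Complex.zero_re, Complex.sub_re] at h3
  linarith

lemma re_inner_one (x : H) (hx : ‖x‖ = 1) : (⟪x, x⟫_ℂ).re = 1 := by
  rw [@inner_self_eq_norm_sq_to_K ℂ]
  simp [hx]

lemma re_inner_smul_one (r : ℝ) (x : H) (hx : ‖x‖ = 1) :
    (⟪(r • (1 : H →L[ℂ] H)) x, x⟫_ℂ).re = r := by
  have : (r • (1 : H →L[ℂ] H)) x = r • x := rfl
  rw [this, re_inner_smul, re_inner_one x hx, mul_one]

end OzekiAux

namespace OzekiAux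
variable {H : Type} [NormedAddCommGroup H] [InnerProductSpace ℂ H] [CompleteSpace H]

lemma sqrt_arith {a₁ b₁ a₂ b₂ : ℝ} (ha₁ : 0 < a₁) (hb₁ : 0 < b₁) (ha₂ : 0 < a₂) (hb₂ : 0 < b₂) :
    ((Real.sqrt (a₂ * b₁⁻¹) - Real.sqrt (b₂ * a₁⁻¹)) * a₁ / 2) ^ 2 =
      ((Real.sqrt (a₁ * a₂) - Real.sqrt (b₁ * b₂)) / 2) ^ 2 * (a₁ * b₁⁻¹) := by
  obtain ⟨u, hu0, rfl⟩ : ∃ u : ℝ, 0 < u ∧ u ^ 2 = a₁ :=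
    ⟨Real.sqrt a₁, Real.sqrt_pos.mpr ha₁, Real.sq_sqrt ha₁.le⟩
  obtain ⟨v, hv0, rfl⟩ : ∃ v : ℝ, 0 < v ∧ v ^ 2 = b₁ :=
    ⟨Real.sqrt b₁, Real.sqrt_pos.mpr hb₁, Real.sq_sqrt hb₁.le⟩
  obtain ⟨w, hw0, rfl⟩ : ∃ w : ℝ, 0 < w ∧ w ^ 2 = a₂ :=
    ⟨Real.sqrt a₂, Real.sqrt_pos.mpr ha₂, Real.sq_sqrt ha₂.le⟩
  obtain ⟨z, hz0, rfl⟩ : ∃ z : ℝ, 0 < z ∧ z ^ 2 = b₂ :=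
    ⟨Real.sqrt b₂, Real.sqrt_pos.mpr hb₂, Real.sq_sqrt hb₂.le⟩
  rw [Real.sqrt_mul (sq_nonneg w), Real.sqrt_mul (sq_nonneg z),
    Real.sqrt_mul (sq_nonneg u) (w ^ 2), Real.sqrt_mul (sq_nonneg v) (z ^ 2),
    Real.sqrt_inv, Real.sqrt_inv, Real.sqrt_sq hu0.le, Real.sqrt_sq hv0.le,
    Real.sqrt_sq hw0.le, Real.sqrt_sq hz0.le]
  field_simp

lemma keyIneq {A B : H →L[ℂ] H} {a₁ b₁ a₂ b₂ : ℝ}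
    (hb₁ : 0 < b₁) (hb₂ : 0 < b₂)
    (hA₁ : b₁ • (1 : H →L[ℂ] H) ≤ A) (hA₂ : A ≤ a₁ • (1 : H →L[ℂ] H))
    (hB₁ : b₂ • (1 : H →L[ℂ] H) ≤ B) (hB₂ : B ≤ a₂ • (1 : H →L[ℂ] H))
    (x : H) (hx : ‖x‖ = 1) :
    (⟪A x, x⟫_ℂ).re * (⟪B x, x⟫_ℂ).re - ((⟪(geoMean (1/2) A B) x, x⟫_ℂ).re) ^ 2 ≤
      ((Real.sqrt (a₁ * a₂) - Real.sqrt (b₁ * b₂)) / 2) ^ 2 * (a₁ * b₁⁻¹) := by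
  -- scalar shorthands
  set p := (⟪A x, x⟫_ℂ).re with hp
  set q := (⟪B x, x⟫_ℂ).re with hq
  set g := (⟪(geoMean (1/2) A B) x, x⟫_ℂ).re with hgdef
  -- basic facts about A and B
  have hA : IsSelfAdjoint A := sa_of_lb hb₁ hA₁
  have hB : IsSelfAdjoint B := sa_of_lb hb₂ hB₁
  have hp1 : b₁ ≤ p := by
    have := re_inner_le hA₁ x; rwa [re_inner_smul_one b₁ x hx] at this
  have hp2 : p ≤ a₁ := by
    have := re_inner_le hA₂ x; rwa [re_inner_smul_one a₁ x hx] at this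
  have hq1 : b₂ ≤ q := by
    have := re_inner_le hB₁ x; rwa [re_inner_smul_one b₂ x hx] at this
  have hq2 : q ≤ a₂ := by
    have := re_inner_le hB₂ x; rwa [re_inner_smul_one a₂ x hx] at this
  have ha₁ : 0 < a₁ := hb₁.trans_le (hp1.trans hp2)
  have ha₂ : 0 < a₂ := hb₂.trans_le (hq1.trans hq2)
  have hAs : spectrum ℝ A ⊆ Set.Icc b₁ a₁ := spec_subset hA hA₁ hA₂
  -- square roots of A
  set sa := cfc Real.sqrt A with hsadef
  set isa := cfc (fun t : ℝ => (Real.sqrt t)⁻¹) A with hisadef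
  have hsaSA : IsSelfAdjoint sa := cfc_predicate _ A
  have hisaSA : IsSelfAdjoint isa := cfc_predicate _ A
  have hsasa : sa * sa = A := sqrt_mul_self_cfc hA hb₁ hAs
  have hsaisa : sa * isa = 1 := sqrt_mul_invsqrt_cfc hA hb₁ hAs
  have hisasa : isa * sa = 1 := invsqrt_mul_sqrt_cfc hA hb₁ hAs
  -- the operator C = A^{-1/2} B A^{-1/2}
  set C := isa * B * isa with hCdef
  have hCSA : IsSelfAdjoint C := conj_sa hA hB
  obtain ⟨hC1, hC2⟩ := conj_bounds hb₁ hb₂ ha₁ ha₂.le hA hAs hB₁ hB₂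
  have hmb : 0 < b₂ * a₁⁻¹ := by positivity
  have hCs : spectrum ℝ C ⊆ Set.Icc (b₂ * a₁⁻¹) (a₂ * b₁⁻¹) := spec_subset hCSA hC1 hC2
  set m := Real.sqrt (b₂ * a₁⁻¹) with hmdef
  set M := Real.sqrt (a₂ * b₁⁻¹) with hMdef
  have hm0 : 0 ≤ m := Real.sqrt_nonneg _
  have hmM : m ≤ M := by
    apply Real.sqrt_le_sqrt
    have h1 : a₁⁻¹ ≤ b₁⁻¹ := inv_anti₀ hb₁ (hp1.trans hp2)
    have h2 : b₂ ≤ a₂ := hq1.trans hq2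
    calc b₂ * a₁⁻¹ ≤ a₂ * a₁⁻¹ := by
          exact mul_le_mul_of_nonneg_right h2 (by positivity)
    _ ≤ a₂ * b₁⁻¹ := mul_le_mul_of_nonneg_left h1 ha₂.le
  set T := cfc Real.sqrt C with hTdef
  -- key operator inequality
  have hcfceq : cfc (fun t : ℝ => (M - Real.sqrt t) * (Real.sqrt t - m)) C =
      (M + m) • T - C - (M * m) • (1 : H →L[ℂ] H) := by
    have congr1 : cfc (fun t : ℝ => (M - Real.sqrt t) * (Real.sqrt t - m)) C =
        cfc (fun t : ℝ => ((M + m) * Real.sqrt t - t) - M * m) C := by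
      apply cfc_congr
      intro t ht
      have h0 : 0 ≤ t := hmb.le.trans (hCs ht).1
      have h1 : Real.sqrt t * Real.sqrt t = t := Real.mul_self_sqrt h0
      linear_combination -h1
    rw [congr1]
    have hc1 : ContinuousOn (fun t : ℝ => (M + m) * Real.sqrt t)
        (spectrum ℝ C) := (continuousOn_const.mul Real.continuous_sqrt.continuousOn)
    rw [cfc_sub (fun t : ℝ => (M + m) * Real.sqrt t - t) (fun _ => M * m) C (hc1.sub (continuousOn_id' _)) continuousOn_const]
    rw [cfc_sub (fun t : ℝ => (M + m) * Real.sqrt t) (fun t => t) C hc1 (continuousOn_id' _)]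
    rw [cfc_const_mul _ _ C Real.continuous_sqrt.continuousOn]
    rw [cfc_const _ C hCSA, cfc_id' ℝ C hCSA, Algebra.algebraMap_eq_smul_one]
  have hkey : (0 : H →L[ℂ] H) ≤ (M + m) • T - C - (M * m) • 1 := by
    rw [← hcfceq]
    apply cfc_nonneg
    intro t ht
    have h1 : m ≤ Real.sqrt t := Real.sqrt_le_sqrt (hCs ht).1
    have h2 : Real.sqrt t ≤ M := Real.sqrt_le_sqrt (hCs ht).2
    exact mul_nonneg (by linarith) (by linarith)
  -- the vector y = A^{1/2} x
  set y := sa x with hydef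
  have hpy : (⟪y, y⟫_ℂ).re = p := by
    rw [hp, ← hsasa, inner_mul_self_sa hsaSA x]
  have hqy : (⟪C y, y⟫_ℂ).re = q := by
    have hBdec : sa * C * sa = B := by
      rw [hCdef]
      simp only [mul_assoc, hisasa, mul_one, mmul hsaisa, one_mul]
    rw [hq, ← hBdec, inner_conj_sa hsaSA x]
  have hgy : (⟪T y, y⟫_ℂ).re = g := by
    have hGdec : sa * T * sa = geoMean (1/2) A B := by
      rw [geoMean, opMean, opPow_half hA, opPow_neg_half hb₁ hAs, ← hisadef, ← hsadef, ← hCdef]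
      congr 2
      exact cfc_congr fun t _ => Real.sqrt_eq_rpow t
    rw [hgdef, ← hGdec, inner_conj_sa hsaSA x]
  -- evaluate the operator inequality at y
  have hmain : q ≤ (M + m) * g - M * m * p := by
    have h0 := ((ContinuousLinearMap.nonneg_iff_isPositive _).mp hkey).inner_nonneg_left y
    have happ : ((M + m) • T - C - (M * m) • (1 : H →L[ℂ] H)) y
        = (M + m) • (T y) - C y - (M * m) • y := by
      simp [ContinuousLinearMap.sub_apply]
    rw [happ, inner_sub_left, inner_sub_left] at h0
    replace h0 := (Complex.le_def.mp h0).1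
    simp only [Complex.zero_re, Complex.sub_re, map_sub, RCLike.re_to_complex, re_inner_smul] at h0
    rw [hpy, hqy, hgy] at h0
    linarith
  -- real arithmetic
  have hp0 : 0 ≤ p := hb₁.le.trans hp1
  have hstep1 : p * q - g ^ 2 ≤ ((M - m) * p / 2) ^ 2 := by
    nlinarith [sq_nonneg (2 * g - (M + m) * p), mul_le_mul_of_nonneg_left hmain hp0]
  have hstep2 : ((M - m) * p / 2) ^ 2 ≤ ((M - m) * a₁ / 2) ^ 2 := by
    have h1 : 0 ≤ (M - m) * p := mul_nonneg (sub_nonneg.mpr hmM) hp0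
    have h2 : (M - m) * p ≤ (M - m) * a₁ := mul_le_mul_of_nonneg_left hp2 (sub_nonneg.mpr hmM)
    nlinarith
  have heq := sqrt_arith ha₁ hb₁ ha₂ hb₂
  rw [← hMdef, ← hmdef] at heq
  linarith [hstep1, hstep2, heq.le]

end OzekiAux

namespace OzekiAux
variable {H : Type} [NormedAddCommGroup H] [InnerProductSpace ℂ H] [CompleteSpace H]

lemma geoMean_dec {A B : H →L[ℂ] H} {a b : ℝ} (hb : 0 < b) (hA : IsSelfAdjoint A)
    (hs : spectrum ℝ A ⊆ Set.Icc b a) :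
    geoMean (1/2) A B = cfc Real.sqrt A *
      cfc Real.sqrt (cfc (fun t : ℝ => (Real.sqrt t)⁻¹) A * B *
        cfc (fun t : ℝ => (Real.sqrt t)⁻¹) A) * cfc Real.sqrt A := by
  rw [geoMean, opMean, opPow_half hA, opPow_neg_half hb hs]
  congr 2
  exact cfc_congr fun t _ => (Real.sqrt_eq_rpow t).symm

lemma geoMean_comm {A B : H →L[ℂ] H} {a₁ b₁ a₂ b₂ : ℝ}
    (hb₁ : 0 < b₁) (hb₂ : 0 < b₂) (ha₁ : 0 < a₁) (ha₂ : 0 < a₂)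
    (hA₁ : b₁ • (1 : H →L[ℂ] H) ≤ A) (hA₂ : A ≤ a₁ • (1 : H →L[ℂ] H))
    (hB₁ : b₂ • (1 : H →L[ℂ] H) ≤ B) (hB₂ : B ≤ a₂ • (1 : H →L[ℂ] H)) :
    geoMean (1/2) A B = geoMean (1/2) B A := by
  have hA : IsSelfAdjoint A := sa_of_lb hb₁ hA₁
  have hB : IsSelfAdjoint B := sa_of_lb hb₂ hB₁
  have hAs : spectrum ℝ A ⊆ Set.Icc b₁ a₁ := spec_subset hA hA₁ hA₂
  have hBs : spectrum ℝ B ⊆ Set.Icc b₂ a₂ := spec_subset hB hB₁ hB₂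
  set sa := cfc Real.sqrt A with hsadef
  set isa := cfc (fun t : ℝ => (Real.sqrt t)⁻¹) A with hisadef
  set sb := cfc Real.sqrt B with hsbdef
  set isb := cfc (fun t : ℝ => (Real.sqrt t)⁻¹) B with hisbdef
  have hsaSA : IsSelfAdjoint sa := cfc_predicate _ A
  have hisaSA : IsSelfAdjoint isa := cfc_predicate _ A
  have hsbSA : IsSelfAdjoint sb := cfc_predicate _ B
  have hisbSA : IsSelfAdjoint isb := cfc_predicate _ B
  have hsasa : sa * sa = A := sqrt_mul_self_cfc hA hb₁ hAs
  have hsaisa : sa * isa = 1 := sqrt_mul_invsqrt_cfc hA hb₁ hAs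
  have hisasa : isa * sa = 1 := invsqrt_mul_sqrt_cfc hA hb₁ hAs
  have hsbsb : sb * sb = B := sqrt_mul_self_cfc hB hb₂ hBs
  have hsbisb : sb * isb = 1 := sqrt_mul_invsqrt_cfc hB hb₂ hBs
  have hisbsb : isb * sb = 1 := invsqrt_mul_sqrt_cfc hB hb₂ hBs
  set C := isa * B * isa with hCdef
  set D := isb * A * isb with hDdef
  have hCSA : IsSelfAdjoint C := conj_sa hA hB
  have hDSA : IsSelfAdjoint D := conj_sa hB hA
  obtain ⟨hC1, hC2⟩ := conj_bounds hb₁ hb₂ ha₁ ha₂.le hA hAs hB₁ hB₂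
  obtain ⟨hD1, hD2⟩ := conj_bounds hb₂ hb₁ ha₂ ha₁.le hB hBs hA₁ hA₂
  have hmbC : 0 < b₂ * a₁⁻¹ := by positivity
  have hmbD : 0 < b₁ * a₂⁻¹ := by positivity
  have hCs : spectrum ℝ C ⊆ Set.Icc (b₂ * a₁⁻¹) (a₂ * b₁⁻¹) := spec_subset hCSA hC1 hC2
  have hDs : spectrum ℝ D ⊆ Set.Icc (b₁ * a₂⁻¹) (a₁ * b₂⁻¹) := spec_subset hDSA hD1 hD2
  set T := cfc Real.sqrt C with hTdef
  set S := cfc Real.sqrt D with hSdef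
  set Si := cfc (fun t : ℝ => (Real.sqrt t)⁻¹) D with hSidef
  have hTT : T * T = C := sqrt_mul_self_cfc hCSA hmbC hCs
  have hSS : S * S = D := sqrt_mul_self_cfc hDSA hmbD hDs
  have hSSi : S * Si = 1 := sqrt_mul_invsqrt_cfc hDSA hmbD hDs
  have hSiS : Si * S = 1 := invsqrt_mul_sqrt_cfc hDSA hmbD hDs
  have hT0 : (0 : H →L[ℂ] H) ≤ T := cfc_nonneg fun t _ => Real.sqrt_nonneg t
  have hS0 : (0 : H →L[ℂ] H) ≤ S := cfc_nonneg fun t _ => Real.sqrt_nonneg t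
  set X := sb * S * sb with hXdef
  set Xi := isb * Si * isb with hXidef
  have hX0 : (0 : H →L[ℂ] H) ≤ X := by
    have := star_left_conjugate_nonneg hS0 sb
    rwa [hsbSA.star_eq] at this
  have hXXi : X * Xi = 1 := by
    rw [hXdef, hXidef]
    simp only [mul_assoc, mmul hsbisb, mmul hSSi, one_mul, hsbisb]
  have hXiX : Xi * X = 1 := by
    rw [hXdef, hXidef]
    simp only [mul_assoc, mmul hisbsb, mmul hSiS, one_mul, hisbsb]
  have h5 : X * (isb * (isb * X)) = A := by
    rw [hXdef]
    simp only [mul_assoc, mmul hsbisb, mmul hisbsb, mmul hSS, hDdef, one_mul, mul_one,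
      hisbsb, hsbisb]
  have h6 : A * (Xi * (B * Xi)) = 1 := by
    conv_lhs => rw [← h5]
    simp only [mul_assoc, ← hsbsb, mmul hXXi, mmul hisbsb, one_mul, hXXi]
  have h7 : isa * (isa * A) = 1 := by
    simp only [← hsasa, mmul hisasa, one_mul, hisasa]
  have h8 : isa * isa = Xi * (B * Xi) := by
    calc isa * isa = isa * isa * (A * (Xi * (B * Xi))) := by rw [h6, mul_one]
    _ = (isa * (isa * A)) * (Xi * (B * Xi)) := by simp only [mul_assoc]
    _ = Xi * (B * Xi) := by rw [h7, one_mul]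
  have h8' : ∀ w : H →L[ℂ] H, isa * (isa * w) = Xi * (B * (Xi * w)) := fun w => by
    have := congrArg (· * w) h8
    simpa only [mul_assoc] using this
  have h9 : X * (isa * (isa * X)) = B := by
    rw [h8' X, hXiX, mul_one, ← mul_assoc, hXXi, one_mul]
  have h9w : ∀ w : H →L[ℂ] H, X * (isa * (isa * (X * w))) = B * w := fun w => by
    have := congrArg (· * w) h9
    simpa only [mul_assoc] using this
  have hP : (isa * (X * isa)) * (isa * (X * isa)) = C := by
    simp only [mul_assoc, h9w, hCdef]
  have hP0 : (0 : H →L[ℂ] H) ≤ isa * (X * isa) := by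
    have := star_left_conjugate_nonneg hX0 isa
    rwa [hisaSA.star_eq, mul_assoc] at this
  have huniq : isa * (X * isa) = T :=
    (CFC.sqrt_unique hP hP0).symm.trans (CFC.sqrt_unique hTT hT0)
  have hfin : sa * T * sa = X := by
    rw [← huniq]
    simp only [mul_assoc, mmul hsaisa, one_mul, hisasa, mul_one]
  rw [geoMean_dec hb₁ hA hAs, geoMean_dec hb₂ hB hBs]
  rw [← hsadef, ← hisadef, ← hsbdef, ← hisbdef, ← hCdef, ← hDdef, ← hTdef, ← hSdef]
  rw [hfin, hXdef]

end OzekiAux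

/-- **Ozeki–Izumino–Mori–Seo inequality (Corollary 3.12).** -/
theorem stmt_13 {H : Type} [NormedAddCommGroup H] [InnerProductSpace ℂ H] [CompleteSpace H]
    (A B : H →L[ℂ] H) (a₁ b₁ a₂ b₂ : ℝ)
    (hb₁ : 0 < b₁) (hb₂ : 0 < b₂)
    (hA₁ : b₁ • (1 : H →L[ℂ] H) ≤ A) (hA₂ : A ≤ a₁ • (1 : H →L[ℂ] H))
    (hB₁ : b₂ • (1 : H →L[ℂ] H) ≤ B) (hB₂ : B ≤ a₂ • (1 : H →L[ℂ] H))
    (x : H) (hx : ‖x‖ = 1) :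
    (⟪A x, x⟫_ℂ).re * (⟪B x, x⟫_ℂ).re - ((⟪(geoMean (1/2) A B) x, x⟫_ℂ).re) ^ 2 ≤
      ((Real.sqrt (a₁ * a₂) - Real.sqrt (b₁ * b₂)) / 2) ^ 2 *
        min (a₁ * b₁⁻¹) (a₂ * b₂⁻¹) := by
  have hp1 : b₁ ≤ (⟪A x, x⟫_ℂ).re := by
    have := OzekiAux.re_inner_le hA₁ x; rwa [OzekiAux.re_inner_smul_one b₁ x hx] at this
  have hp2 : (⟪A x, x⟫_ℂ).re ≤ a₁ := by
    have := OzekiAux.re_inner_le hA₂ x; rwa [OzekiAux.re_inner_smul_one a₁ x hx] at this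
  have hq1 : b₂ ≤ (⟪B x, x⟫_ℂ).re := by
    have := OzekiAux.re_inner_le hB₁ x; rwa [OzekiAux.re_inner_smul_one b₂ x hx] at this
  have hq2 : (⟪B x, x⟫_ℂ).re ≤ a₂ := by
    have := OzekiAux.re_inner_le hB₂ x; rwa [OzekiAux.re_inner_smul_one a₂ x hx] at this
  have ha₁ : 0 < a₁ := hb₁.trans_le (hp1.trans hp2)
  have ha₂ : 0 < a₂ := hb₂.trans_le (hq1.trans hq2)
  have key1 := OzekiAux.keyIneq hb₁ hb₂ hA₁ hA₂ hB₁ hB₂ x hx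
  have key2 := OzekiAux.keyIneq hb₂ hb₁ hB₁ hB₂ hA₁ hA₂ x hx
  rw [← OzekiAux.geoMean_comm hb₁ hb₂ ha₁ ha₂ hA₁ hA₂ hB₁ hB₂, mul_comm a₂ a₁, mul_comm b₂ b₁] at key2
  rcases min_cases (a₁ * b₁⁻¹) (a₂ * b₂⁻¹) with ⟨hmin, -⟩ | ⟨hmin, -⟩ <;> rw [hmin]
  · exact key1
  · rw [mul_comm ((⟪A x, x⟫_ℂ).re)]
    exact key2
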